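/- Let z₁ and z₂ be independent random vectors in ℝ^d with finite second moments. Then Var(z₁ · z₂) ≤ 3·Tr(Cov(z₁))·‖Cov(z₂)‖ + 3·‖E[z₁]‖²·‖Cov(z₂)‖ + 3·‖E[z₂]‖²·‖Cov(z₁)‖. -/

import Mathlib

open MeasureTheory ProbabilityTheory Matrix
open scoped RealInnerProductSpace

/-- The operator (spectral) norm of a real `d × d` matrix. -/
noncomputable def opNorm {d : ℕ} (M : Matrix (Fin d) (Fin d) ℝ) : ℝ :=
  ‖Matrix.toEuclideanCLM (𝕜 := ℝ) M‖

/-- The covariance matrix `Cov(z) = E[(z-E[z])(z-E[z])ᵀ]` of a random vector `z`. -/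
noncomputable def covM {Ω : Type*} [MeasurableSpace Ω] (μ : Measure Ω) {d : ℕ}
    (z : Ω → EuclideanSpace ℝ (Fin d)) : Matrix (Fin d) (Fin d) ℝ :=
  fun i j => ∫ ω, (z ω i - ∫ ω', z ω' i ∂μ) * (z ω j - ∫ ω', z ω' j ∂μ) ∂μ

lemma l2_mul_integrable {Ω : Type*} [MeasurableSpace Ω] {μ : Measure Ω} {f g : Ω → ℝ}
    (hf : MemLp f 2 μ) (hg : MemLp g 2 μ) : Integrable (fun ω => f ω * g ω) μ := by
  have h : MemLp (f • g) 1 μ := hg.smul (r := 1) hf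
  rw [memLp_one_iff_integrable] at h
  exact h

lemma euclid_apply {d : ℕ} (M : Matrix (Fin d) (Fin d) ℝ) (x : EuclideanSpace ℝ (Fin d)) (i : Fin d) :
    (Matrix.toEuclideanCLM (𝕜 := ℝ) M) x i = ∑ j, M i j * x j := by
  have h := Matrix.ofLp_toEuclideanCLM (𝕜 := ℝ) M x
  have h2 := congrFun h i
  simpa [Matrix.mulVec, dotProduct] using h2

lemma norm_sq_eq {d : ℕ} (x : EuclideanSpace ℝ (Fin d)) : ‖x‖ ^ 2 = ∑ i, x i * x i := by
  rw [EuclideanSpace.norm_sq_eq]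
  simp [sq]

lemma quad_bound {d : ℕ} (M : Matrix (Fin d) (Fin d) ℝ) (x : EuclideanSpace ℝ (Fin d)) :
    ∑ i, ∑ j, x i * M i j * x j ≤ opNorm M * ‖x‖ ^ 2 := by
  have h1 : ∑ i, ∑ j, x i * M i j * x j = ⟪x, (Matrix.toEuclideanCLM (𝕜 := ℝ) M) x⟫ := by
    simp only [PiLp.inner_apply, RCLike.inner_apply, starRingEnd_apply, star_trivial,
      euclid_apply, Finset.mul_sum, Finset.sum_mul]
    exact Finset.sum_congr rfl fun i _ => Finset.sum_congr rfl fun j _ => by ring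
  have h2 : ⟪x, (Matrix.toEuclideanCLM (𝕜 := ℝ) M) x⟫ ≤ ‖x‖ * ‖(Matrix.toEuclideanCLM (𝕜 := ℝ) M) x‖ :=
    real_inner_le_norm _ _
  have h3 : ‖(Matrix.toEuclideanCLM (𝕜 := ℝ) M) x‖ ≤ opNorm M * ‖x‖ :=
    (Matrix.toEuclideanCLM (𝕜 := ℝ) M).le_opNorm x
  nlinarith [norm_nonneg x, norm_nonneg ((Matrix.toEuclideanCLM (𝕜 := ℝ) M) x)]

/-- For independent random vectors `z₁, z₂` in `ℝ^d` with finite second moments,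
`Var(z₁ · z₂) ≤ 3·Tr(Cov(z₁))·‖Cov(z₂)‖ + 3·‖E[z₁]‖²·‖Cov(z₂)‖ + 3·‖E[z₂]‖²·‖Cov(z₁)‖`. -/
theorem var_dotProduct_le {Ω : Type*} [MeasurableSpace Ω] (μ : Measure Ω)
    [IsProbabilityMeasure μ] {d : ℕ} (z₁ z₂ : Ω → EuclideanSpace ℝ (Fin d))
    (h1 : MemLp z₁ 2 μ) (h2 : MemLp z₂ 2 μ) (hind : IndepFun z₁ z₂ μ) :
    variance (fun ω => ⟪z₁ ω, z₂ ω⟫) μ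
      ≤ 3 * (covM μ z₁).trace * opNorm (covM μ z₂)
        + 3 * ‖∫ ω, z₁ ω ∂μ‖ ^ 2 * opNorm (covM μ z₂)
        + 3 * ‖∫ ω, z₂ ω ∂μ‖ ^ 2 * opNorm (covM μ z₁) := by
  classical
  set m1 : EuclideanSpace ℝ (Fin d) := ∫ ω, z₁ ω ∂μ with hm1_def
  set m2 : EuclideanSpace ℝ (Fin d) := ∫ ω, z₂ ω ∂μ with hm2_def
  have hz1int : Integrable z₁ μ := h1.integrable one_le_two
  have hz2int : Integrable z₂ μ := h2.integrable one_le_two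
  have hm1i : ∀ i, ∫ ω, z₁ ω i ∂μ = m1 i := by
    intro i
    have h := (EuclideanSpace.proj i : EuclideanSpace ℝ (Fin d) →L[ℝ] ℝ).integral_comp_comm hz1int
    simpa using h
  have hm2i : ∀ i, ∫ ω, z₂ ω i ∂μ = m2 i := by
    intro i
    have h := (EuclideanSpace.proj i : EuclideanSpace ℝ (Fin d) →L[ℝ] ℝ).integral_comp_comm hz2int
    simpa using h
  -- coordinates are in L²
  have hz1c : ∀ i, MemLp (fun ω => z₁ ω i) 2 μ := fun i =>
    (EuclideanSpace.proj i : EuclideanSpace ℝ (Fin d) →L[ℝ] ℝ).comp_memLp' h1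
  have hz2c : ∀ i, MemLp (fun ω => z₂ ω i) 2 μ := fun i =>
    (EuclideanSpace.proj i : EuclideanSpace ℝ (Fin d) →L[ℝ] ℝ).comp_memLp' h2
  have hu2 : ∀ i, MemLp (fun ω => z₁ ω i - m1 i) 2 μ := fun i => (hz1c i).sub (memLp_const _)
  have hv2 : ∀ i, MemLp (fun ω => z₂ ω i - m2 i) 2 μ := fun i => (hz2c i).sub (memLp_const _)
  have huu : ∀ i j, Integrable (fun ω => (z₁ ω i - m1 i) * (z₁ ω j - m1 j)) μ := fun i j =>
    l2_mul_integrable (hu2 i) (hu2 j)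
  have hvv : ∀ i j, Integrable (fun ω => (z₂ ω i - m2 i) * (z₂ ω j - m2 j)) μ := fun i j =>
    l2_mul_integrable (hv2 i) (hv2 j)
  have hImeas : ∀ (i : Fin d) (a : ℝ),
      Measurable (fun x : EuclideanSpace ℝ (Fin d) => x i - a) := fun i a =>
    ((EuclideanSpace.proj i : EuclideanSpace ℝ (Fin d) →L[ℝ] ℝ).continuous.measurable).sub
      measurable_const
  have hIprod : ∀ (a b c e : ℝ) (i j k l : Fin d),
      IndepFun (fun ω => (z₁ ω i - a) * (z₁ ω j - b))
        (fun ω => (z₂ ω k - c) * (z₂ ω l - e)) μ := fun a b c e i j k l =>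
    hind.comp ((hImeas i a).mul (hImeas j b)) ((hImeas k c).mul (hImeas l e))
  -- products of one coordinate of z₁ and one of z₂ are in L²
  have hraw : ∀ (a b : ℝ) (i j : Fin d),
      MemLp (fun ω => (z₁ ω i - a) * (z₂ ω j - b)) 2 μ := by
    intro a b i j
    have hu : MemLp (fun ω => z₁ ω i - a) 2 μ := (hz1c i).sub (memLp_const _)
    have hv : MemLp (fun ω => z₂ ω j - b) 2 μ := (hz2c j).sub (memLp_const _)
    have hint : Integrable
        ((fun ω => (z₁ ω i - a) * (z₁ ω i - a)) * fun ω => (z₂ ω j - b) * (z₂ ω j - b)) μ :=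
      (hIprod a a b b i i j j).integrable_mul
        (l2_mul_integrable hu hu) (l2_mul_integrable hv hv)
    refine (memLp_two_iff_integrable_sq (hu.aestronglyMeasurable.mul hv.aestronglyMeasurable)).2 ?_
    exact hint.congr (ae_of_all _ fun ω => by simp [Pi.mul_apply]; ring)
  -- inner product as a sum
  have hip : ∀ x y : EuclideanSpace ℝ (Fin d), ⟪x, y⟫ = ∑ i, x i * y i := fun x y => by
    simp [PiLp.inner_apply, RCLike.inner_apply, mul_comm]
  -- covariance entries
  have hcov1 : ∀ i j, covM μ z₁ i j = ∫ ω, (z₁ ω i - m1 i) * (z₁ ω j - m1 j) ∂μ := by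
    intro i j; simp only [covM, hm1i]
  have hcov2 : ∀ i j, covM μ z₂ i j = ∫ ω, (z₂ ω i - m2 i) * (z₂ ω j - m2 j) ∂μ := by
    intro i j; simp only [covM, hm2i]
  -- the three centered pieces
  set A : Ω → ℝ := fun ω => ∑ i, m1 i * (z₂ ω i - m2 i) with hA_def
  set B : Ω → ℝ := fun ω => ∑ i, (z₁ ω i - m1 i) * m2 i with hB_def
  set C : Ω → ℝ := fun ω => ∑ i, (z₁ ω i - m1 i) * (z₂ ω i - m2 i) with hC_def
  set c : ℝ := ∑ i, m1 i * m2 i with hc_def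
  have hA2 : MemLp A 2 μ := by
    have h := memLp_finset_sum' Finset.univ
      (fun i (_ : i ∈ Finset.univ) => (hv2 i).const_mul (m1 i))
    exact h.ae_eq (ae_of_all _ fun ω => by simp [hA_def])
  have hB2 : MemLp B 2 μ := by
    have h := memLp_finset_sum' Finset.univ
      (fun i (_ : i ∈ Finset.univ) => ((hu2 i).const_mul (m2 i)))
    exact h.ae_eq (ae_of_all _ fun ω => by simp [hB_def]; exact Finset.sum_congr rfl fun i _ => by ring)
  have hC2 : MemLp C 2 μ := by
    have h := memLp_finset_sum' Finset.univ
      (fun i (_ : i ∈ Finset.univ) => hraw (m1 i) (m2 i) i i)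
    exact h.ae_eq (ae_of_all _ fun ω => by simp [hC_def])
  set X : Ω → ℝ := fun ω => ⟪z₁ ω, z₂ ω⟫ with hX_def
  have hdecomp : ∀ ω, X ω = A ω + B ω + C ω + c := by
    intro ω
    simp only [hX_def, hA_def, hB_def, hC_def, hc_def, hip]
    rw [← Finset.sum_add_distrib, ← Finset.sum_add_distrib, ← Finset.sum_add_distrib]
    exact Finset.sum_congr rfl fun i _ => by ring
  set S : Ω → ℝ := fun ω => A ω + B ω + C ω with hS_def
  have hS2 : MemLp S 2 μ := (hA2.add hB2).add hC2
  have hSint : Integrable S μ := hS2.integrable one_le_two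
  have hX2 : MemLp X 2 μ :=
    ((hS2.add (memLp_const c)).ae_eq (ae_of_all _ fun ω => by
      simp only [Pi.add_apply]; exact (hdecomp ω).symm))
  -- variance X ≤ ∫ S²
  have hvar : variance X μ ≤ ∫ ω, S ω ^ 2 ∂μ := by
    rw [variance_eq_sub hX2]
    have eX : ∫ ω, X ω ∂μ = (∫ ω, S ω ∂μ) + c := by
      rw [integral_congr_ae (ae_of_all _ fun ω => hdecomp ω)]
      rw [integral_add hSint (integrable_const c), integral_const]
      simp
    have eX2 : ∫ ω, X ω ^ 2 ∂μ
        = ∫ ω, S ω ^ 2 ∂μ + 2 * c * ∫ ω, S ω ∂μ + c ^ 2 := by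
      rw [integral_congr_ae (ae_of_all _ fun ω => show X ω ^ 2
        = S ω ^ 2 + 2 * c * S ω + c ^ 2 by rw [hdecomp ω]; ring)]
      have i1 : Integrable (fun ω => S ω ^ 2 + 2 * c * S ω) μ :=
        hS2.integrable_sq.add (hSint.const_mul (2 * c))
      have i2 : Integrable (fun ω => 2 * c * S ω) μ := hSint.const_mul (2 * c)
      rw [integral_add i1 (integrable_const _), integral_add hS2.integrable_sq i2,
        integral_const_mul, integral_const]
      simp
    have h1 : (∫ ω, (X ^ 2) ω ∂μ) = ∫ ω, X ω ^ 2 ∂μ := by simp [Pi.pow_apply]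
    rw [h1, eX2, eX]
    nlinarith [sq_nonneg (∫ ω, S ω ∂μ)]
  -- ∫ S² ≤ 3∫A² + 3∫B² + 3∫C²
  have hsplit : ∫ ω, S ω ^ 2 ∂μ
      ≤ 3 * ∫ ω, A ω ^ 2 ∂μ + 3 * ∫ ω, B ω ^ 2 ∂μ + 3 * ∫ ω, C ω ^ 2 ∂μ := by
    have hmono : ∫ ω, S ω ^ 2 ∂μ
        ≤ ∫ ω, 3 * A ω ^ 2 + 3 * B ω ^ 2 + 3 * C ω ^ 2 ∂μ := by
      have i1 : Integrable (fun ω => 3 * A ω ^ 2 + 3 * B ω ^ 2 + 3 * C ω ^ 2) μ :=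
        ((hA2.integrable_sq.const_mul 3).add (hB2.integrable_sq.const_mul 3)).add
          (hC2.integrable_sq.const_mul 3)
      refine integral_mono hS2.integrable_sq i1 (fun ω => ?_)
      simp only [hS_def]
      nlinarith [sq_nonneg (A ω - B ω), sq_nonneg (A ω - C ω), sq_nonneg (B ω - C ω)]
    have i2 : Integrable (fun ω => 3 * A ω ^ 2 + 3 * B ω ^ 2) μ :=
      (hA2.integrable_sq.const_mul 3).add (hB2.integrable_sq.const_mul 3)
    have i3 : Integrable (fun ω => 3 * C ω ^ 2) μ := hC2.integrable_sq.const_mul 3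
    have i4 : Integrable (fun ω => 3 * A ω ^ 2) μ := hA2.integrable_sq.const_mul 3
    have i5 : Integrable (fun ω => 3 * B ω ^ 2) μ := hB2.integrable_sq.const_mul 3
    rw [integral_add i2 i3, integral_add i4 i5,
      integral_const_mul, integral_const_mul, integral_const_mul] at hmono
    linarith
  -- bound ∫ A²
  have hEA : ∫ ω, A ω ^ 2 ∂μ ≤ opNorm (covM μ z₂) * ‖m1‖ ^ 2 := by
    have e1 : ∫ ω, A ω ^ 2 ∂μ = ∑ i, ∑ j, m1 i * covM μ z₂ i j * m1 j := by
      have hpt : ∀ ω, A ω ^ 2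
          = ∑ i, ∑ j, m1 i * m1 j * ((z₂ ω i - m2 i) * (z₂ ω j - m2 j)) := by
        intro ω
        simp only [hA_def]
        rw [sq, Finset.sum_mul_sum]
        exact Finset.sum_congr rfl fun i _ => Finset.sum_congr rfl fun j _ => by ring
      rw [integral_congr_ae (ae_of_all _ hpt),
        integral_finset_sum _ (fun i _ => integrable_finset_sum _
          (fun j _ => (hvv i j).const_mul _))]
      refine Finset.sum_congr rfl fun i _ => ?_
      rw [integral_finset_sum _ (fun j _ => (hvv i j).const_mul _)]
      exact Finset.sum_congr rfl fun j _ => by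
        rw [integral_const_mul, hcov2 i j]; ring
    rw [e1]
    exact quad_bound _ _
  -- bound ∫ B²
  have hEB : ∫ ω, B ω ^ 2 ∂μ ≤ opNorm (covM μ z₁) * ‖m2‖ ^ 2 := by
    have e1 : ∫ ω, B ω ^ 2 ∂μ = ∑ i, ∑ j, m2 i * covM μ z₁ i j * m2 j := by
      have hpt : ∀ ω, B ω ^ 2
          = ∑ i, ∑ j, m2 i * m2 j * ((z₁ ω i - m1 i) * (z₁ ω j - m1 j)) := by
        intro ω
        simp only [hB_def]
        rw [sq, Finset.sum_mul_sum]
        exact Finset.sum_congr rfl fun i _ => Finset.sum_congr rfl fun j _ => by ring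
      rw [integral_congr_ae (ae_of_all _ hpt),
        integral_finset_sum _ (fun i _ => integrable_finset_sum _
          (fun j _ => (huu i j).const_mul _))]
      refine Finset.sum_congr rfl fun i _ => ?_
      rw [integral_finset_sum _ (fun j _ => (huu i j).const_mul _)]
      exact Finset.sum_congr rfl fun j _ => by
        rw [integral_const_mul, hcov1 i j]; ring
    rw [e1]
    exact quad_bound _ _
  -- bound ∫ C²
  have huuvv : ∀ i j, Integrable
      (fun ω => ((z₁ ω i - m1 i) * (z₁ ω j - m1 j)) *
        ((z₂ ω i - m2 i) * (z₂ ω j - m2 j))) μ := fun i j =>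
    (hIprod (m1 i) (m1 j) (m2 i) (m2 j) i j i j).integrable_mul (huu i j) (hvv i j)
  have hEC : ∫ ω, C ω ^ 2 ∂μ ≤ opNorm (covM μ z₂) * (covM μ z₁).trace := by
    have e1 : ∫ ω, C ω ^ 2 ∂μ = ∑ i, ∑ j, covM μ z₁ i j * covM μ z₂ i j := by
      have hpt : ∀ ω, C ω ^ 2
          = ∑ i, ∑ j, ((z₁ ω i - m1 i) * (z₁ ω j - m1 j))
            * ((z₂ ω i - m2 i) * (z₂ ω j - m2 j)) := by
        intro ω
        simp only [hC_def]
        rw [sq, Finset.sum_mul_sum]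
        exact Finset.sum_congr rfl fun i _ => Finset.sum_congr rfl fun j _ => by ring
      rw [integral_congr_ae (ae_of_all _ hpt),
        integral_finset_sum _ (fun i _ => integrable_finset_sum _ (fun j _ => huuvv i j))]
      refine Finset.sum_congr rfl fun i _ => ?_
      rw [integral_finset_sum _ (fun j _ => huuvv i j)]
      refine Finset.sum_congr rfl fun j _ => ?_
      have e : ∫ ω, ((z₁ ω i - m1 i) * (z₁ ω j - m1 j))
            * ((z₂ ω i - m2 i) * (z₂ ω j - m2 j)) ∂μ
          = (∫ ω, (z₁ ω i - m1 i) * (z₁ ω j - m1 j) ∂μ)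
            * ∫ ω, (z₂ ω i - m2 i) * (z₂ ω j - m2 j) ∂μ :=
        (hIprod (m1 i) (m1 j) (m2 i) (m2 j) i j i j).integral_mul_eq_mul_integral
          (huu i j).aestronglyMeasurable (hvv i j).aestronglyMeasurable
      rw [e, hcov1 i j, hcov2 i j]
    have e2 : ∑ i, ∑ j, covM μ z₁ i j * covM μ z₂ i j
        = ∫ ω, ∑ i, ∑ j, (z₁ ω i - m1 i) * covM μ z₂ i j * (z₁ ω j - m1 j) ∂μ := by
      rw [integral_finset_sum _ (fun i _ => integrable_finset_sum _
        (fun j _ => by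
          have : (fun ω => (z₁ ω i - m1 i) * covM μ z₂ i j * (z₁ ω j - m1 j))
              = fun ω => covM μ z₂ i j * ((z₁ ω i - m1 i) * (z₁ ω j - m1 j)) := by
            funext ω; ring
          rw [this]; exact (huu i j).const_mul _))]
      refine Finset.sum_congr rfl fun i _ => ?_
      rw [integral_finset_sum _ (fun j _ => by
        have : (fun ω => (z₁ ω i - m1 i) * covM μ z₂ i j * (z₁ ω j - m1 j))
            = fun ω => covM μ z₂ i j * ((z₁ ω i - m1 i) * (z₁ ω j - m1 j)) := by
          funext ω; ring
        rw [this]; exact (huu i j).const_mul _)]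
      refine Finset.sum_congr rfl fun j _ => ?_
      have : (fun ω => (z₁ ω i - m1 i) * covM μ z₂ i j * (z₁ ω j - m1 j))
          = fun ω => covM μ z₂ i j * ((z₁ ω i - m1 i) * (z₁ ω j - m1 j)) := by
        funext ω; ring
      rw [this, integral_const_mul, hcov1 i j]; ring
    have hsubapp : ∀ (ω : Ω) (i : Fin d), (z₁ ω - m1) i = z₁ ω i - m1 i := fun ω i => rfl
    have hnormsq : Integrable (fun ω => ‖z₁ ω - m1‖ ^ 2) μ := by
      have e : (fun ω => ‖z₁ ω - m1‖ ^ 2)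
          = fun ω => ∑ i, (z₁ ω i - m1 i) * (z₁ ω i - m1 i) := by
        funext ω
        rw [norm_sq_eq]
        exact Finset.sum_congr rfl fun i _ => by rw [hsubapp]
      rw [e]
      exact integrable_finset_sum _ fun i _ => huu i i
    have hle : ∫ ω, ∑ i, ∑ j, (z₁ ω i - m1 i) * covM μ z₂ i j * (z₁ ω j - m1 j) ∂μ
        ≤ ∫ ω, opNorm (covM μ z₂) * ‖z₁ ω - m1‖ ^ 2 ∂μ := by
      refine integral_mono (integrable_finset_sum _ (fun i _ => integrable_finset_sum _
        (fun j _ => by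
          have : (fun ω => (z₁ ω i - m1 i) * covM μ z₂ i j * (z₁ ω j - m1 j))
              = fun ω => covM μ z₂ i j * ((z₁ ω i - m1 i) * (z₁ ω j - m1 j)) := by
            funext ω; ring
          rw [this]; exact (huu i j).const_mul _))) (hnormsq.const_mul _) (fun ω => ?_)
      have h := quad_bound (covM μ z₂) (z₁ ω - m1)
      simpa [hsubapp] using h
    have e3 : ∫ ω, opNorm (covM μ z₂) * ‖z₁ ω - m1‖ ^ 2 ∂μ
        = opNorm (covM μ z₂) * (covM μ z₁).trace := by
      rw [integral_const_mul]
      congr 1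
      have e : (fun ω => ‖z₁ ω - m1‖ ^ 2)
          = fun ω => ∑ i, (z₁ ω i - m1 i) * (z₁ ω i - m1 i) := by
        funext ω
        rw [norm_sq_eq]
        exact Finset.sum_congr rfl fun i _ => by rw [hsubapp]
      rw [e, integral_finset_sum _ (fun i _ => huu i i)]
      simp only [Matrix.trace, Matrix.diag]
      exact Finset.sum_congr rfl fun i _ => (hcov1 i i).symm
    calc ∫ ω, C ω ^ 2 ∂μ = ∑ i, ∑ j, covM μ z₁ i j * covM μ z₂ i j := e1
      _ = ∫ ω, ∑ i, ∑ j, (z₁ ω i - m1 i) * covM μ z₂ i j * (z₁ ω j - m1 j) ∂μ := e2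
      _ ≤ ∫ ω, opNorm (covM μ z₂) * ‖z₁ ω - m1‖ ^ 2 ∂μ := hle
      _ = opNorm (covM μ z₂) * (covM μ z₁).trace := e3
  linarith
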